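/- Let M ∈ M₃(ℝ), let μ ≥ 0 and κ ≥ 0, and define τ := −μ( M + Mᵀ − (2/3)(tr M) I ) − κ (tr M) I, where I is the 3×3 identity matrix. Let K ∈ M₃(ℝ) be positive semidefinite, let w ∈ ℝ³, let T > 0 and ρ > 0 be real numbers, and set h_s := −(1/T) K w. Then the entropy production is nonnegative: −(1/(ρT)) (τ : M) − (1/(ρT)) (h_s · w) ≥ 0. -/

import Mathlib

open MeasureTheory Matrix

noncomputable section

/-- Points of ℝ³. -/
abbrev R3 : Type := Fin 3 → ℝ

/-- Partial derivative `∂f/∂xᵢ` of a scalar field. -/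
def pd (i : Fin 3) (f : R3 → ℝ) (x : R3) : ℝ := fderiv ℝ f x (Pi.single i 1)

/-- Gradient of a scalar field. -/
def grad (f : R3 → ℝ) (x : R3) : R3 := fun i => pd i f x

/-- Divergence of a vector field. -/
def vdiv (u : R3 → R3) (x : R3) : ℝ := ∑ i, pd i (fun y => u y i) x

/-- Jacobian matrix `(Grad u)ᵢⱼ = ∂uᵢ/∂xⱼ` of a vector field. -/
def vGrad (u : R3 → R3) (x : R3) : Matrix (Fin 3) (Fin 3) ℝ :=
  Matrix.of fun i j => pd j (fun y => u y i) x

/-- Divergence `(Div A)ⱼ = ∑ᵢ ∂Aᵢⱼ/∂xᵢ` of a matrix field. -/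
def mDiv (A : R3 → Matrix (Fin 3) (Fin 3) ℝ) (x : R3) : R3 :=
  fun j => ∑ i, pd i (fun y => A y i j) x

/-- Frobenius inner product `A : B = ∑ᵢⱼ Aᵢⱼ Bᵢⱼ`. -/
def frob (A B : Matrix (Fin 3) (Fin 3) ℝ) : ℝ := ∑ i, ∑ j, A i j * B i j

/-- Curl of a vector field. -/
def curl (u : R3 → R3) (x : R3) : R3 :=
  ![pd 1 (fun y => u y 2) x - pd 2 (fun y => u y 1) x,
    pd 2 (fun y => u y 0) x - pd 0 (fun y => u y 2) x,
    pd 0 (fun y => u y 1) x - pd 1 (fun y => u y 0) x]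

/-- Cross product on ℝ³. -/
def cross (u v : R3) : R3 :=
  ![u 1 * v 2 - u 2 * v 1, u 2 * v 0 - u 0 * v 2, u 0 * v 1 - u 1 * v 0]

/-- Pointwise second-law inequality: the rate of entropy production
`−(1/(ρT)) τ : M − (1/(ρT)) h_s · w` is nonnegative for the Newtonian stress
`τ = −μ(M + Mᵀ − (2/3)(tr M) I) − κ (tr M) I` and entropy flux `h_s = −(1/T) K w`. -/
theorem stmt8 (M : Matrix (Fin 3) (Fin 3) ℝ) (μ κ : ℝ) (hμ : 0 ≤ μ) (hκ : 0 ≤ κ)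
    (K : Matrix (Fin 3) (Fin 3) ℝ) (hK : K.PosSemidef) (w : Fin 3 → ℝ)
    (T ρ : ℝ) (hT : 0 < T) (hρ : 0 < ρ)
    (τ : Matrix (Fin 3) (Fin 3) ℝ)
    (hτ : τ = (-μ) • (M + Mᵀ - ((2/3) * M.trace) • (1 : Matrix (Fin 3) (Fin 3) ℝ))
              - (κ * M.trace) • (1 : Matrix (Fin 3) (Fin 3) ℝ))
    (h_s : Fin 3 → ℝ) (hhs : h_s = (-(1/T)) • (K *ᵥ w)) :
    0 ≤ - (1/(ρ*T)) * frob τ M - (1/(ρ*T)) * (h_s ⬝ᵥ w) := by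
  subst hτ hhs
  have hrt : 0 < ρ * T := mul_pos hρ hT
  have hinv : 0 < 1/(ρ*T) := by positivity
  have h1 : 0 ≤ - frob ((-μ) • (M + Mᵀ - ((2/3) * M.trace) • (1 : Matrix (Fin 3) (Fin 3) ℝ))
              - (κ * M.trace) • (1 : Matrix (Fin 3) (Fin 3) ℝ)) M := by
    simp only [frob, Matrix.trace, Matrix.diag, Matrix.sub_apply, Matrix.smul_apply,
      Matrix.add_apply, Matrix.transpose_apply, Matrix.one_apply, Fin.sum_univ_three,
      smul_eq_mul, Fin.ext_iff]
    norm_num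
    nlinarith [sq_nonneg (M 0 0 - M 1 1), sq_nonneg (M 1 1 - M 2 2), sq_nonneg (M 0 0 - M 2 2),
      sq_nonneg (M 0 1 + M 1 0), sq_nonneg (M 0 2 + M 2 0), sq_nonneg (M 1 2 + M 2 1),
      mul_nonneg hμ (sq_nonneg (M 0 0 - M 1 1)), mul_nonneg hμ (sq_nonneg (M 1 1 - M 2 2)),
      mul_nonneg hμ (sq_nonneg (M 0 0 - M 2 2)),
      mul_nonneg hμ (sq_nonneg (M 0 1 + M 1 0)), mul_nonneg hμ (sq_nonneg (M 0 2 + M 2 0)),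
      mul_nonneg hμ (sq_nonneg (M 1 2 + M 2 1)),
      mul_nonneg hκ (sq_nonneg (M 0 0 + M 1 1 + M 2 2))]
  have h2 : 0 ≤ - (((-(1/T)) • (K *ᵥ w)) ⬝ᵥ w) := by
    have hq := hK.dotProduct_mulVec_nonneg w
    have hd : (star w) ⬝ᵥ (K *ᵥ w) = (K *ᵥ w) ⬝ᵥ w := by
      simp [dotProduct_comm]
    rw [hd] at hq
    have : ((-(1/T)) • (K *ᵥ w)) ⬝ᵥ w = (-(1/T)) * ((K *ᵥ w) ⬝ᵥ w) := by
      simp [smul_dotProduct]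
    rw [this]
    have hTi : 0 ≤ 1/T := by positivity
    nlinarith
  nlinarith [mul_nonneg hinv.le h1, mul_nonneg hinv.le h2]
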